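/- Under the stated smoothness, strong convexity, minimizer, heterogeneity-bound and stochastic-gradient hypotheses, ∫ ‖∑_{k∈Π} w_k (G_k(ω) − ∇F_k(θ))‖² dP(ω) ≤ C2 + 2·(C1 − 1)·L²·(‖θ − θ*‖² + Ω/μ). -/

import Mathlib

open Finset RealInnerProductSpace MeasureTheory

/-- Weighted Jensen inequality for the squared norm. -/
lemma jensen_norm_sq {d : ℕ} {ι : Type*} [Fintype ι] (w : ι → ℝ)
    (hw : ∀ k, 0 ≤ w k) (hw1 : ∑ k, w k = 1) (v : ι → EuclideanSpace ℝ (Fin d)) :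
    ‖∑ k, w k • v k‖ ^ 2 ≤ ∑ k, w k * ‖v k‖ ^ 2 := by
  have h1 : ‖∑ k, w k • v k‖ ≤ ∑ k, w k * ‖v k‖ := by
    refine (norm_sum_le _ _).trans_eq ?_
    refine Finset.sum_congr rfl fun k _ => ?_
    rw [norm_smul, Real.norm_eq_abs, abs_of_nonneg (hw k)]
  have key := Finset.sum_mul_sq_le_sq_mul_sq Finset.univ
    (fun k => Real.sqrt (w k)) (fun k => Real.sqrt (w k) * ‖v k‖)
  have e1 : ∑ k, Real.sqrt (w k) * (Real.sqrt (w k) * ‖v k‖) = ∑ k, w k * ‖v k‖ :=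
    Finset.sum_congr rfl fun k _ => by rw [← mul_assoc, Real.mul_self_sqrt (hw k)]
  have e2 : ∑ k, Real.sqrt (w k) ^ 2 = (1 : ℝ) := by
    rw [← hw1]; exact Finset.sum_congr rfl fun k _ => Real.sq_sqrt (hw k)
  have e3 : ∑ k, (Real.sqrt (w k) * ‖v k‖) ^ 2 = ∑ k, w k * ‖v k‖ ^ 2 :=
    Finset.sum_congr rfl fun k _ => by rw [mul_pow, Real.sq_sqrt (hw k)]
  rw [e1, e2, e3, one_mul] at key
  calc ‖∑ k, w k • v k‖ ^ 2 ≤ (∑ k, w k * ‖v k‖) ^ 2 :=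
        pow_le_pow_left₀ (norm_nonneg _) h1 2
    _ ≤ ∑ k, w k * ‖v k‖ ^ 2 := key

set_option maxHeartbeats 1600000 in
theorem variance_of_aggregated_stochastic_gradient
    (d : ℕ) (hd : 0 < d)
    (ι : Type*) [Fintype ι]
    (w : ι → ℝ) (hw : ∀ k, 0 ≤ w k) (hw1 : ∑ k, w k = 1)
    (F : ι → EuclideanSpace ℝ (Fin d) → ℝ)
    (gradF : ι → EuclideanSpace ℝ (Fin d) → EuclideanSpace ℝ (Fin d))
    (hdiff : ∀ k x, HasGradientAt (F k) (gradF k x) x)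
    (L μ : ℝ) (hμ : 0 < μ) (hLμ : μ ≤ L)
    (hsmooth : ∀ k, ∀ x y : EuclideanSpace ℝ (Fin d),
      F k x - F k y ≤ ⟪gradF k y, x - y⟫ + (L / 2) * ‖x - y‖ ^ 2)
    (hstrong : ∀ k, ∀ x y : EuclideanSpace ℝ (Fin d),
      F k x - F k y ≥ ⟪gradF k y, x - y⟫ + (μ / 2) * ‖x - y‖ ^ 2)
    (θmin : ι → EuclideanSpace ℝ (Fin d)) (Fkstar : ι → ℝ)
    (hmin : ∀ k, F k (θmin k) = Fkstar k)
    (hminle : ∀ k, ∀ x, Fkstar k ≤ F k x)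
    (θstar : EuclideanSpace ℝ (Fin d)) (Fstar : ℝ)
    (φ1 φ2 : ℝ) (hφ1 : 0 ≤ φ1) (hφ2 : 0 ≤ φ2)
    (hhet1 : |Fstar - ∑ k, w k * Fkstar k| ≤ φ1)
    (hhet2 : |Fstar - ∑ k, w k * F k θstar| ≤ φ2)
    (Ω : ℝ) (hΩ : Ω = 2 * (φ1 + φ2))
    (θ : EuclideanSpace ℝ (Fin d))
    (ΩP : Type*) [MeasurableSpace ΩP] (P : Measure ΩP) [IsProbabilityMeasure P]
    (G : ι → ΩP → EuclideanSpace ℝ (Fin d))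
    (hG2 : ∀ k, MemLp (G k) 2 P)
    (hunbiased : ∀ k, ∫ ω, G k ω ∂P = gradF k θ)
    (C1 C2 : ℝ) (hC1 : 1 ≤ C1) (hC2 : 0 ≤ C2)
    (hmoment : ∀ k, ∫ ω, ‖G k ω‖ ^ 2 ∂P ≤ C1 * ‖gradF k θ‖ ^ 2 + C2) :
    ∫ ω, ‖∑ k, w k • (G k ω - gradF k θ)‖ ^ 2 ∂P
      ≤ C2 + 2 * (C1 - 1) * L ^ 2 * (‖θ - θstar‖ ^ 2 + Ω / μ) := by
  have hL : 0 < L := lt_of_lt_of_le hμ hLμ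
  -- Step A: ‖∇F_k(y)‖² ≤ 2L (F_k(y) - F_k*)
  have hgrad_sq : ∀ k (y : EuclideanSpace ℝ (Fin d)),
      ‖gradF k y‖ ^ 2 ≤ 2 * L * (F k y - Fkstar k) := by
    intro k y
    have h := hsmooth k (y - L⁻¹ • gradF k y) y
    have hx : (y - L⁻¹ • gradF k y) - y = -(L⁻¹ • gradF k y) := by abel
    rw [hx, inner_neg_right, real_inner_smul_right, real_inner_self_eq_norm_sq,
      norm_neg, norm_smul, Real.norm_eq_abs, abs_of_nonneg (le_of_lt (inv_pos.mpr hL))] at h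
    have hm := hminle k (y - L⁻¹ • gradF k y)
    have hr : -(L⁻¹ * ‖gradF k y‖ ^ 2) + L / 2 * (L⁻¹ * ‖gradF k y‖) ^ 2
        = -(‖gradF k y‖ ^ 2) / (2 * L) := by
      field_simp
      ring
    rw [hr, neg_div] at h
    have h2L : (0:ℝ) < 2 * L := by linarith
    have hdiv : ‖gradF k y‖ ^ 2 / (2 * L) ≤ F k y - Fkstar k := by linarith
    have h9 := (div_le_iff₀ h2L).mp hdiv
    rw [mul_comm] at h9
    exact h9
    
  -- Step B: gradient vanishes at the minimizer
  have hgradmin : ∀ k, gradF k (θmin k) = 0 := by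
    intro k
    have h := hgrad_sq k (θmin k)
    rw [hmin k, sub_self, mul_zero] at h
    have : ‖gradF k (θmin k)‖ = 0 := by nlinarith [norm_nonneg (gradF k (θmin k))]
    exact norm_eq_zero.mp this
  -- suboptimality gap at θ is controlled by distance to θmin
  have hgap : ∀ k, F k θ - Fkstar k ≤ (L / 2) * ‖θ - θmin k‖ ^ 2 := by
    intro k
    have h := hsmooth k θ (θmin k)
    rw [hgradmin k, inner_zero_left, hmin k] at h
    linarith
  -- strong convexity at the minimizer
  have hsc : ∀ k, (μ / 2) * ‖θstar - θmin k‖ ^ 2 ≤ F k θstar - Fkstar k := by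
    intro k
    have h := hstrong k θstar (θmin k)
    rw [hgradmin k, inner_zero_left, hmin k] at h
    linarith
  -- heterogeneity bound
  have hhet : ∑ k, w k * (F k θstar - Fkstar k) ≤ φ1 + φ2 := by
    have h1 := abs_le.mp hhet1
    have h2 := abs_le.mp hhet2
    have : ∑ k, w k * (F k θstar - Fkstar k)
        = (∑ k, w k * F k θstar) - ∑ k, w k * Fkstar k := by
      rw [← Finset.sum_sub_distrib]
      exact Finset.sum_congr rfl fun k _ => by ring
    rw [this]; linarith [h1.1, h1.2, h2.1, h2.2]
  -- Step D: key bound on ∑ w_k ‖∇F_k(θ)‖²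
  have hkey : ∑ k, w k * ‖gradF k θ‖ ^ 2
      ≤ 2 * L ^ 2 * (‖θ - θstar‖ ^ 2 + Ω / μ) := by
    have hk : ∀ k, ‖gradF k θ‖ ^ 2
        ≤ 2 * L ^ 2 * ‖θ - θstar‖ ^ 2 + (4 * L ^ 2 / μ) * (F k θstar - Fkstar k) := by
      intro k
      have h1 := hgrad_sq k θ
      have h2 := hgap k
      have h3 := hsc k
      have h4 : ‖θ - θmin k‖ ^ 2 ≤ 2 * ‖θ - θstar‖ ^ 2 + 2 * ‖θstar - θmin k‖ ^ 2 := by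
        have h5 : θ - θmin k = (θ - θstar) + (θstar - θmin k) := by abel
        have h6 := norm_add_le (θ - θstar) (θstar - θmin k)
        rw [← h5] at h6
        nlinarith [norm_nonneg (θ - θmin k), norm_nonneg (θ - θstar),
          norm_nonneg (θstar - θmin k), sq_nonneg (‖θ - θstar‖ - ‖θstar - θmin k‖)]
      have h7 : ‖θstar - θmin k‖ ^ 2 ≤ (2 / μ) * (F k θstar - Fkstar k) := by
        rw [div_mul_eq_mul_div, le_div_iff₀ hμ]; nlinarith
      have h8 : (4 * L ^ 2 / μ) * (F k θstar - Fkstar k)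
          = 2 * L ^ 2 * ((2 / μ) * (F k θstar - Fkstar k)) := by ring
      nlinarith [sq_nonneg L]
    calc ∑ k, w k * ‖gradF k θ‖ ^ 2
        ≤ ∑ k, (w k * (2 * L ^ 2 * ‖θ - θstar‖ ^ 2)
            + (4 * L ^ 2 / μ) * (w k * (F k θstar - Fkstar k))) := by
          refine Finset.sum_le_sum fun k _ => ?_
          exact le_trans (mul_le_mul_of_nonneg_left (hk k) (hw k)) (le_of_eq (by ring))
      _ = (∑ k, w k) * (2 * L ^ 2 * ‖θ - θstar‖ ^ 2)
            + (4 * L ^ 2 / μ) * ∑ k, w k * (F k θstar - Fkstar k) := by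
          rw [Finset.sum_add_distrib, ← Finset.sum_mul, ← Finset.mul_sum]
      _ ≤ 2 * L ^ 2 * ‖θ - θstar‖ ^ 2 + (4 * L ^ 2 / μ) * (φ1 + φ2) := by
          rw [hw1, one_mul]
          have ht : (0:ℝ) ≤ 4 * L ^ 2 / μ := by positivity
          have := mul_le_mul_of_nonneg_left hhet ht
          linarith
      _ = 2 * L ^ 2 * (‖θ - θstar‖ ^ 2 + Ω / μ) := by
          rw [hΩ]; field_simp; ring
  -- Step E: per-component variance identity
  have hGint : ∀ k, Integrable (G k) P := fun k => (hG2 k).integrable one_le_two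
  have IG2 : ∀ k, Integrable (fun ω => ‖G k ω‖ ^ 2) P :=
    fun k => (hG2 k).norm.integrable_sq
  have Iinner : ∀ k, Integrable (fun ω => ⟪gradF k θ, G k ω⟫) P :=
    fun k => (hGint k).const_inner _
  have IX2 : ∀ k, Integrable (fun ω => ‖G k ω - gradF k θ‖ ^ 2) P := by
    intro k
    exact ((hG2 k).sub (memLp_const _)).norm.integrable_sq
  have hvar : ∀ k, ∫ ω, ‖G k ω - gradF k θ‖ ^ 2 ∂P
      = (∫ ω, ‖G k ω‖ ^ 2 ∂P) - ‖gradF k θ‖ ^ 2 := by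
    intro k
    have hrw : (fun ω => ‖G k ω - gradF k θ‖ ^ 2)
        = fun ω => ‖G k ω‖ ^ 2 - 2 * ⟪gradF k θ, G k ω⟫ + ‖gradF k θ‖ ^ 2 := by
      funext ω
      rw [norm_sub_sq_real, real_inner_comm]
    have e1 : ∫ ω, (‖G k ω‖ ^ 2 - 2 * ⟪gradF k θ, G k ω⟫ + ‖gradF k θ‖ ^ 2) ∂P
        = (∫ ω, (‖G k ω‖ ^ 2 - 2 * ⟪gradF k θ, G k ω⟫) ∂P)
          + ∫ _ω, (‖gradF k θ‖ ^ 2 : ℝ) ∂P :=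
      integral_add ((IG2 k).sub ((Iinner k).const_mul 2)) (integrable_const _)
    have e2 : ∫ ω, (‖G k ω‖ ^ 2 - 2 * ⟪gradF k θ, G k ω⟫) ∂P
        = (∫ ω, ‖G k ω‖ ^ 2 ∂P) - ∫ ω, 2 * ⟪gradF k θ, G k ω⟫ ∂P :=
      integral_sub (IG2 k) ((Iinner k).const_mul 2)
    have e3 : ∫ ω, 2 * ⟪gradF k θ, G k ω⟫ ∂P = 2 * ∫ ω, ⟪gradF k θ, G k ω⟫ ∂P :=
      integral_const_mul 2 _
    have e4 : ∫ ω, ⟪gradF k θ, G k ω⟫ ∂P = ‖gradF k θ‖ ^ 2 := by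
      rw [integral_inner (hGint k), hunbiased k, real_inner_self_eq_norm_sq]
    have e5 : ∫ _ω, (‖gradF k θ‖ ^ 2 : ℝ) ∂P = ‖gradF k θ‖ ^ 2 := by
      simp [integral_const]
    rw [hrw, e1, e2, e3, e4, e5]
    ring
  -- Step F: combine
  have hbound : ∫ ω, ‖∑ k, w k • (G k ω - gradF k θ)‖ ^ 2 ∂P
      ≤ ∑ k, w k * ∫ ω, ‖G k ω - gradF k θ‖ ^ 2 ∂P := by
    have hint : Integrable (fun ω => ∑ k, w k * ‖G k ω - gradF k θ‖ ^ 2) P :=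
      integrable_finset_sum _ fun k _ => (IX2 k).const_mul (w k)
    calc ∫ ω, ‖∑ k, w k • (G k ω - gradF k θ)‖ ^ 2 ∂P
        ≤ ∫ ω, ∑ k, w k * ‖G k ω - gradF k θ‖ ^ 2 ∂P := by
          refine integral_mono_of_nonneg (ae_of_all _ fun ω => by positivity) hint
            (ae_of_all _ fun ω => ?_)
          exact jensen_norm_sq w hw hw1 _
      _ = ∑ k, w k * ∫ ω, ‖G k ω - gradF k θ‖ ^ 2 ∂P := by
          rw [integral_finset_sum _ fun k _ => (IX2 k).const_mul (w k)]
          exact Finset.sum_congr rfl fun k _ => integral_const_mul _ _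
  have hsum2 : ∑ k, w k * ∫ ω, ‖G k ω - gradF k θ‖ ^ 2 ∂P
      ≤ C2 + (C1 - 1) * ∑ k, w k * ‖gradF k θ‖ ^ 2 := by
    calc ∑ k, w k * ∫ ω, ‖G k ω - gradF k θ‖ ^ 2 ∂P
        ≤ ∑ k, (w k * C2 + (C1 - 1) * (w k * ‖gradF k θ‖ ^ 2)) := by
          refine Finset.sum_le_sum fun k _ => ?_
          rw [hvar k]
          have h1 : (∫ ω, ‖G k ω‖ ^ 2 ∂P) - ‖gradF k θ‖ ^ 2
              ≤ C2 + (C1 - 1) * ‖gradF k θ‖ ^ 2 := by linarith [hmoment k]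
          exact le_trans (mul_le_mul_of_nonneg_left h1 (hw k)) (le_of_eq (by ring))
      _ = (∑ k, w k) * C2 + (C1 - 1) * ∑ k, w k * ‖gradF k θ‖ ^ 2 := by
          rw [Finset.sum_add_distrib, ← Finset.sum_mul, ← Finset.mul_sum]
      _ = C2 + (C1 - 1) * ∑ k, w k * ‖gradF k θ‖ ^ 2 := by rw [hw1, one_mul]
  have hC1' : (0:ℝ) ≤ C1 - 1 := by linarith
  calc ∫ ω, ‖∑ k, w k • (G k ω - gradF k θ)‖ ^ 2 ∂P
      ≤ C2 + (C1 - 1) * ∑ k, w k * ‖gradF k θ‖ ^ 2 := hbound.trans hsum2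
    _ ≤ C2 + (C1 - 1) * (2 * L ^ 2 * (‖θ - θstar‖ ^ 2 + Ω / μ)) := by
        have := mul_le_mul_of_nonneg_left hkey hC1'
        linarith
    _ = C2 + 2 * (C1 - 1) * L ^ 2 * (‖θ - θstar‖ ^ 2 + Ω / μ) := by ring
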